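/- arXiv:math/0609172 — 3 statements merged into one kernel-verified Lean document; each statement's English description precedes it below -/
import Mathlib

section
/- Let B = ⊕_{p∈ℤ} B_p be a ℤ-graded ring and X ∈ B_1 a central homogeneous element of degree 1 that is not a zero divisor. Then the two-sided ideal ⟨1 − X⟩ generated by 1 − X does not contain any nonzero homogeneous element of B. -/
open DirectSum Polynomial
open scoped Classical

variable {R : Type*} [Ring R]

/-- The top degree of `f` (junk value `0` for `f = 0`). -/
noncomputable def deg (A : ℤ → AddSubgroup R) [GradedRing A] (f : R) : ℤ :=
  WithBot.unbotD 0 ((DirectSum.decompose A f).support.max)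

/-- The leading homogeneous part `LH f` of `f`. -/
noncomputable def LH (A : ℤ → AddSubgroup R) [GradedRing A] (f : R) : R :=
  (DirectSum.decompose A f (deg A f) : R)

/-- The homogenization `f*` of `f` with respect to the central degree-one variable `t = X`. -/
noncomputable def homog (A : ℤ → AddSubgroup R) [GradedRing A] (f : R) : Polynomial R :=
  ∑ i ∈ (DirectSum.decompose A f).support,
    Polynomial.C (DirectSum.decompose A f i : R) * Polynomial.X ^ (deg A f - i).toNat

/-- Dehomogenization `F ↦ F_*`, i.e. evaluation of `t = X` at `1`. -/
noncomputable def dehom : Polynomial R →+* R :=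
  Polynomial.eval₂RingHom' (RingHom.id R) 1 (fun a => Commute.one_right a)

/-- The degree-`p` component of the mixed gradation on `R[t]`, spanned by the
elements `a * t^j` with `a ∈ A i` and `i + j = p`. -/
noncomputable def mixed (A : ℤ → AddSubgroup R) (p : ℤ) : AddSubgroup (Polynomial R) :=
  AddSubgroup.closure
    { F | ∃ (i : ℤ) (j : ℕ) (a : R), a ∈ A i ∧ i + (j : ℤ) = p ∧
        F = Polynomial.C a * Polynomial.X ^ j }

/-- In a ℤ-graded ring `B`, if `X` is a central homogeneous element of
degree `1` which is not a zero divisor, then the two-sided ideal generated by `1 - X`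
contains no nonzero homogeneous element. -/
theorem stmt0 {B : Type*} [Ring B] (B' : ℤ → AddSubgroup B) [GradedRing B']
    (X : B) (hX1 : X ∈ B' 1) (hXcentral : ∀ b : B, Commute X b)
    (hXregl : ∀ b : B, X * b = 0 → b = 0) (hXregr : ∀ b : B, b * X = 0 → b = 0) :
    ∀ (p : ℤ) (b : B), b ∈ B' p → b ∈ TwoSidedIdeal.span {1 - X} → b = 0 := by
  intro p b hbp hbspan
  -- `1 - X` is central
  have hcomm : ∀ r : B, (1 - X) * r = r * (1 - X) := fun r => by
    have h := (hXcentral r).eq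
    rw [sub_mul, mul_sub, one_mul, mul_one, h]
  -- Step 1 : `b = (1 - X) * c` for some `c`.
  obtain ⟨c, hc⟩ : ∃ c : B, b = (1 - X) * c := by
    have hmem := TwoSidedIdeal.mem_span_iff.mp hbspan
      (TwoSidedIdeal.mk' {r : B | ∃ c, r = (1 - X) * c}
        ⟨0, by simp⟩
        (fun {x y} hx hy => by
          obtain ⟨cx, hx⟩ := hx; obtain ⟨cy, hy⟩ := hy
          exact ⟨cx + cy, by rw [hx, hy, mul_add]⟩)
        (fun {x} hx => by
          obtain ⟨cx, hx⟩ := hx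
          exact ⟨-cx, by rw [hx, mul_neg]⟩)
        (fun {x y} hy => by
          obtain ⟨cy, hy⟩ := hy
          exact ⟨x * cy, by rw [hy, ← mul_assoc, ← hcomm x, mul_assoc]⟩)
        (fun {x y} hx => by
          obtain ⟨cx, hx⟩ := hx
          exact ⟨cx * y, by rw [hx, mul_assoc]⟩))
      (by
        intro r hr
        rw [Set.mem_singleton_iff] at hr
        subst hr
        exact (TwoSidedIdeal.mem_mk' _ _ _ _ _ _ _).mpr ⟨1, (mul_one _).symm⟩)
    rwa [TwoSidedIdeal.mem_mk'] at hmem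
  -- Notation for homogeneous components of `c`.
  set cq : ℤ → B := fun q => (DirectSum.decompose B' c q : B) with hcq
  -- components vanish outside the support
  have h0 : ∀ q : ℤ, q ∉ (DirectSum.decompose B' c).support → cq q = 0 := by
    intro q hq
    simp only [hcq]
    rw [DFinsupp.notMem_support_iff.mp hq]
    rfl
  -- the key component-wise relation
  have hXc : ∀ q : ℤ, (DirectSum.decompose B' (X * c) q : B) = X * cq (q - 1) := by
    intro q
    have h1 : DirectSum.decompose B' X = DirectSum.of (fun i => B' i) 1 ⟨X, hX1⟩ :=
      DirectSum.decompose_of_mem B' hX1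
    have hq : (1 : ℤ) + (q - 1) = q := by ring
    rw [DirectSum.decompose_mul, h1]
    conv_lhs => rw [← hq]
    rw [DirectSum.coe_of_mul_apply_add]
  have key : ∀ q : ℤ, (DirectSum.decompose B' b q : B) = cq q - X * cq (q - 1) := by
    intro q
    have hb' : b = c - X * c := by rw [hc, sub_mul, one_mul]
    rw [hb', DirectSum.decompose_sub]
    rw [DirectSum.sub_apply, AddSubgroupClass.coe_sub, hXc]
  have hrel : ∀ q : ℤ, q ≠ p → cq q = X * cq (q - 1) := by
    intro q hq
    have := key q
    rw [DirectSum.decompose_of_mem_ne B' hbp (Ne.symm hq)] at this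
    exact sub_eq_zero.mp this.symm
  have hrelp : b = cq p - X * cq (p - 1) := by
    have := key p
    rwa [DirectSum.decompose_of_mem_same B' hbp] at this
  -- bounds on the support
  obtain ⟨M, hM⟩ := (DirectSum.decompose B' c).support.bddAbove
  obtain ⟨m, hm⟩ := (DirectSum.decompose B' c).support.bddBelow
  have hbigzero : ∀ q : ℤ, M < q → cq q = 0 := by
    intro q hq
    refine h0 q fun hmem => ?_
    exact absurd (hM hmem) (by omega)
  have hsmallzero : ∀ q : ℤ, q < m → cq q = 0 := by
    intro q hq
    refine h0 q fun hmem => ?_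
    exact absurd (hm hmem) (by omega)
  -- regularity of powers of X
  have hregpow : ∀ (n : ℕ) (r : B), X ^ n * r = 0 → r = 0 := by
    intro n
    induction n with
    | zero => intro r h; simpa using h
    | succ k ih =>
      intro r h
      rw [pow_succ, mul_assoc] at h
      exact hXregl r (ih (X * r) h)
  -- low side : `cq (p-1) = 0`
  have hlow : ∀ n : ℕ, cq (p - 1) = X ^ n * cq (p - 1 - n) := by
    intro n
    induction n with
    | zero => simp
    | succ k ih =>
      have h1 : cq (p - 1 - k) = X * cq (p - 1 - k - 1) := hrel _ (by omega)
      rw [ih, h1, ← mul_assoc, ← pow_succ]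
      congr 2
      push_cast
      ring
  have hlp : cq (p - 1) = 0 := by
    obtain ⟨n, hn⟩ : ∃ n : ℕ, p - 1 - (n : ℤ) < m := ⟨(p - m).toNat + 1, by omega⟩
    rw [hlow n, hsmallzero _ hn, mul_zero]
  -- high side : `cq p = 0`
  have hhigh : ∀ n : ℕ, cq (p + 1 + n) = X ^ n * cq (p + 1) := by
    intro n
    induction n with
    | zero => simp
    | succ k ih =>
      have h1 : cq (p + 1 + (k + 1 : ℕ)) = X * cq (p + 1 + (k + 1 : ℕ) - 1) := hrel _ (by omega)
      have h2 : (p + 1 + (k + 1 : ℕ) - 1 : ℤ) = p + 1 + k := by push_cast; ring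
      rw [h1, h2, ih, ← mul_assoc, ← pow_succ']
  have hp1 : cq (p + 1) = 0 := by
    obtain ⟨n, hn⟩ : ∃ n : ℕ, M < p + 1 + (n : ℤ) := ⟨(M - p).toNat + 1, by omega⟩
    exact hregpow n _ (by rw [← hhigh n]; exact hbigzero _ hn)
  have hpp : cq p = 0 := by
    have h1 : cq (p + 1) = X * cq (p + 1 - 1) := hrel _ (by omega)
    have h2 : (p + 1 - 1 : ℤ) = p := by ring
    rw [h2, hp1] at h1
    exact hXregl _ h1.symm
  rw [hrelp, hpp, hlp, mul_zero, sub_zero]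
end

section
/- If I is a two-sided ideal of a ℤ-graded ring R and ⟨I*⟩ is the graded two-sided ideal of R[t] generated by the homogenizations f* of all f ∈ I, then every homogeneous element F ∈ ⟨I*⟩ is of the form F = t^r f* for some r ∈ ℕ and some f ∈ I. -/
open DirectSum Polynomial
open scoped Classical

variable {R : Type*} [Ring R]

lemma dehom_apply (F : Polynomial R) : dehom F = ∑ n ∈ F.support, F.coeff n := by
  show Polynomial.eval₂ (RingHom.id R) 1 F = _
  rw [Polynomial.eval₂_eq_sum, Polynomial.sum]
  simp

lemma dehom_homog (A : ℤ → AddSubgroup R) [GradedRing A] (g : R) :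
    dehom (homog A g) = g := by
  rw [homog, map_sum]
  have : ∀ i ∈ (DirectSum.decompose A g).support,
      dehom (Polynomial.C (DirectSum.decompose A g i : R) * Polynomial.X ^ (deg A g - i).toNat)
        = (DirectSum.decompose A g i : R) := by
    intro i _
    rw [map_mul, map_pow]
    show Polynomial.eval₂ _ 1 _ * (Polynomial.eval₂ _ 1 _) ^ _ = _
    simp
  rw [Finset.sum_congr rfl this]
  exact DirectSum.sum_support_decompose A g

lemma coeff_mem_of_mem_mixed (A : ℤ → AddSubgroup R) {F : Polynomial R} {p : ℤ}
    (hF : F ∈ mixed A p) (n : ℕ) : F.coeff n ∈ A (p - n) := by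
  induction hF using AddSubgroup.closure_induction with
  | mem x hx =>
    obtain ⟨i, j, a, ha, hij, rfl⟩ := hx
    rw [Polynomial.coeff_C_mul, Polynomial.coeff_X_pow]
    by_cases h : n = j
    · subst h
      have : p - (n : ℤ) = i := by omega
      rw [this, if_pos rfl, mul_one]
      exact ha
    · rw [if_neg h, mul_zero]
      exact (A _).zero_mem
  | zero => simpa using (A _).zero_mem
  | add x y _ _ hx hy => simpa [Polynomial.coeff_add] using (A _).add_mem hx hy
  | neg x _ hx => simpa using (A _).neg_mem hx


/-- Every homogeneous element `F` of the homogenization ideal `⟨I*⟩` is of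
the form `t^r f*` for some `r ∈ ℕ` and `f ∈ I`. -/
theorem stmt6 (A : ℤ → AddSubgroup R) [GradedRing A] (I : TwoSidedIdeal R)
    (F : Polynomial R) (p : ℤ) (hF : F ∈ mixed A p)
    (hFI : F ∈ TwoSidedIdeal.span (homog A '' (I : Set R))) :
    ∃ (r : ℕ) (f : R), f ∈ I ∧ F = Polynomial.X ^ r * homog A f := by
  classical
  set f : R := dehom F with hf
  have hfI : f ∈ I := by
    have hsub : (homog A '' (I : Set R)) ⊆ (TwoSidedIdeal.comap dehom I : Set (Polynomial R)) := by
      rintro _ ⟨g, hg, rfl⟩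
      show _ ∈ TwoSidedIdeal.comap dehom I
      rw [TwoSidedIdeal.mem_comap, dehom_homog]
      exact hg
    have := TwoSidedIdeal.mem_span_iff.mp hFI (TwoSidedIdeal.comap dehom I) hsub
    rwa [TwoSidedIdeal.mem_comap] at this
  -- coefficients are homogeneous
  have hcoeff : ∀ n : ℕ, F.coeff n ∈ A (p - n) := coeff_mem_of_mem_mixed A hF
  by_cases hF0 : F = 0
  · refine ⟨0, 0, I.zero_mem, ?_⟩
    simp [hF0, homog]
  -- key computation of decomposition of f
  have hfsum : f = ∑ n ∈ F.support, F.coeff n := dehom_apply F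
  have key : ∀ i : ℤ, ((DirectSum.decompose A f) i : R)
      = ∑ n ∈ F.support, if (p - (n : ℤ)) = i then F.coeff n else 0 := by
    intro i
    conv_lhs => rw [hfsum]
    rw [DirectSum.decompose_sum, DFinsupp.finset_sum_apply, AddSubmonoidClass.coe_finset_sum]
    refine Finset.sum_congr rfl fun n _ => ?_
    by_cases h : (p - (n : ℤ)) = i
    · rw [if_pos h, ← h, DirectSum.decompose_of_mem_same A (hcoeff n)]
    · rw [if_neg h, DirectSum.decompose_of_mem_ne A (hcoeff n) h]
  have key2 : ∀ i : ℤ, i ≤ p → ((DirectSum.decompose A f) i : R) = F.coeff (p - i).toNat := by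
    intro i hi
    rw [key]
    have : ∀ n ∈ F.support, (if (p - (n : ℤ)) = i then F.coeff n else 0)
        = (if n = (p - i).toNat then F.coeff n else 0) := by
      intro n _
      congr 1
      simp only [eq_iff_iff]
      omega
    rw [Finset.sum_congr rfl this, Finset.sum_ite_eq' F.support ((p - i).toNat) F.coeff]
    by_cases h : (p - i).toNat ∈ F.support
    · rw [if_pos h]
    · rw [if_neg h]
      exact (Polynomial.notMem_support_iff.mp h).symm
  have key3 : ∀ i : ℤ, p < i → ((DirectSum.decompose A f) i : R) = 0 := by
    intro i hi
    rw [key]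
    refine Finset.sum_eq_zero fun n _ => ?_
    rw [if_neg (by omega)]
  -- support of decompose
  have hsupp : (DirectSum.decompose A f).support = F.support.image (fun n : ℕ => p - (n : ℤ)) := by
    ext i
    rw [DFinsupp.mem_support_iff, Finset.mem_image]
    constructor
    · intro h
      by_cases hi : i ≤ p
      · refine ⟨(p - i).toNat, ?_, by omega⟩
        rw [Polynomial.mem_support_iff]
        intro hc
        exact h (ZeroMemClass.coe_eq_zero.mp (by rw [key2 i hi, hc]))
      · exact absurd (ZeroMemClass.coe_eq_zero.mp (key3 i (by omega))) h
    · rintro ⟨n, hn, rfl⟩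
      intro h
      have h0 : ((DirectSum.decompose A f) (p - (n : ℤ)) : R) = 0 := by
        rw [h, ZeroMemClass.coe_zero]
      rw [key2 _ (by omega)] at h0
      have hn' : ((p : ℤ) - (p - (n : ℤ))).toNat = n := by omega
      rw [hn'] at h0
      exact Polynomial.mem_support_iff.mp hn h0
  set r : ℕ := F.natTrailingDegree with hr
  have hrsupp : r ∈ F.support := Polynomial.natTrailingDegree_mem_support_of_nonzero hF0
  have hrle : ∀ n ∈ F.support, r ≤ n := fun n hn => Polynomial.natTrailingDegree_le_of_mem_supp n hn
  have hdeg : deg A f = p - r := by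
    have hmax : (DirectSum.decompose A f).support.max = ((p - (r : ℤ) : ℤ) : WithBot ℤ) := by
      apply le_antisymm
      · apply Finset.max_le
        intro b hb
        rw [hsupp, Finset.mem_image] at hb
        obtain ⟨n, hn, rfl⟩ := hb
        have := hrle n hn
        exact_mod_cast (by omega : p - (n : ℤ) ≤ p - (r : ℤ))
      · apply Finset.le_max
        rw [hsupp, Finset.mem_image]
        exact ⟨r, hrsupp, rfl⟩
    rw [deg, hmax]
    rfl
  refine ⟨r, f, hfI, ?_⟩
  rw [homog, hdeg, hsupp, Finset.sum_image (by intro a _ b _ h; simp only at h; omega), Finset.mul_sum]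
  conv_lhs => rw [Polynomial.as_sum_support F]
  refine Finset.sum_congr rfl fun n hn => ?_
  have h1 : ((DirectSum.decompose A f) (p - (n : ℤ)) : R) = F.coeff n := by
    rw [key2 _ (by omega)]
    congr 1
    omega
  have h2 : ((p - (r : ℤ)) - (p - (n : ℤ))).toNat = n - r := by omega
  rw [h1, h2, ← mul_assoc, Polynomial.X_pow_mul, mul_assoc, ← pow_add,
    Nat.add_sub_cancel' (hrle n hn), Polynomial.C_mul_X_pow_eq_monomial]
end

section
/- Let R = K⟨X⟩ be a free algebra over a field K with a graded monomial ordering ≽_{gr}, I a two-sided ideal, and 𝓖 ⊆ I. Then 𝓖 is a Gröbner basis of I if and only if LH(𝓖) is a Gröbner basis of the graded ideal ⟨LH(I)⟩. -/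
open Polynomial
open scoped Classical

variable {X K : Type*} [Field K] [LinearOrder (FreeMonoid X)]

/-- The leading monomial (as a word) of an element of the free algebra
`K⟨X⟩ = MonoidAlgebra K (FreeMonoid X)`, with junk value the empty word for `0`. -/
noncomputable def lm (f : MonoidAlgebra K (FreeMonoid X)) : FreeMonoid X :=
  WithBot.unbotD 1 f.coeff.support.max

/-- The set of leading monomials (viewed as elements of the free algebra) of the
nonzero elements of `S`. -/
noncomputable def LMset (S : Set (MonoidAlgebra K (FreeMonoid X))) :
    Set (MonoidAlgebra K (FreeMonoid X)) :=
  (fun f => MonoidAlgebra.single (lm f) (1 : K)) '' (S \ {0})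

/-- The degree (top word length) of an element of the free algebra. -/
noncomputable def dW (f : MonoidAlgebra K (FreeMonoid X)) : ℕ :=
  f.coeff.support.sup (fun w => w.length)

/-- The leading homogeneous part of an element of the free algebra. -/
noncomputable def LHm (f : MonoidAlgebra K (FreeMonoid X)) : MonoidAlgebra K (FreeMonoid X) :=
  MonoidAlgebra.ofCoeff (Finsupp.filter (fun w => w.length = dW f) f.coeff)

/-- The set of leading homogeneous parts of the nonzero elements of `S`. -/
noncomputable def LHset (S : Set (MonoidAlgebra K (FreeMonoid X))) :
    Set (MonoidAlgebra K (FreeMonoid X)) :=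
  LHm '' (S \ {0})

/-- A graded (length-compatible) ordering: words of smaller length are smaller. -/
def GradedOrder (X : Type*) [LinearOrder (FreeMonoid X)] : Prop :=
  ∀ u v : FreeMonoid X, u.length < v.length → u < v

/-- A monomial ordering: compatible with multiplication on both sides. -/
def MonomialOrder' (X : Type*) [LinearOrder (FreeMonoid X)] : Prop :=
  ∀ u v w : FreeMonoid X, u < v → w * u < w * v ∧ u * w < v * w


noncomputable def Hc (n : ℕ) (f : MonoidAlgebra K (FreeMonoid X)) :
    MonoidAlgebra K (FreeMonoid X) :=
  MonoidAlgebra.ofCoeff (Finsupp.filter (fun w => w.length = n) f.coeff)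

lemma LHm_eq_Hc (f : MonoidAlgebra K (FreeMonoid X)) : LHm f = Hc (dW f) f := rfl

lemma lm_spec {f : MonoidAlgebra K (FreeMonoid X)} (hf : f ≠ 0) :
    f.coeff.support.max = (lm f : WithBot (FreeMonoid X)) := by
  obtain ⟨m, hm⟩ := Finset.max_of_nonempty (Finsupp.support_nonempty_iff.mpr (mt MonoidAlgebra.coeff_eq_zero.mp hf))
  rw [lm, hm]; rfl

lemma lm_mem {f : MonoidAlgebra K (FreeMonoid X)} (hf : f ≠ 0) : lm f ∈ f.coeff.support :=
  Finset.mem_of_max (lm_spec hf)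

lemma le_lm {f : MonoidAlgebra K (FreeMonoid X)} {w : FreeMonoid X}
    (hw : w ∈ f.coeff.support) : w ≤ lm f := by
  have hf : f ≠ 0 := by rintro rfl; simp at hw
  have := Finset.le_max hw
  rw [lm_spec hf] at this
  exact_mod_cast this

lemma length_le_dW {f : MonoidAlgebra K (FreeMonoid X)} {w : FreeMonoid X}
    (hw : w ∈ f.coeff.support) : w.length ≤ dW f := Finset.le_sup hw

lemma length_lm (hgr : GradedOrder X) {f : MonoidAlgebra K (FreeMonoid X)} (hf : f ≠ 0) :
    (lm f).length = dW f := by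
  refine le_antisymm (length_le_dW (lm_mem hf)) (Finset.sup_le fun w hw => ?_)
  by_contra h
  exact absurd (hgr _ _ (not_le.mp h)) (not_lt.mpr (le_lm hw))

lemma mem_support_Hc {n : ℕ} {f : MonoidAlgebra K (FreeMonoid X)} {w : FreeMonoid X} :
    w ∈ (Hc n f).coeff.support ↔ w ∈ f.coeff.support ∧ w.length = n := by
  rw [Hc, MonoidAlgebra.coeff_ofCoeff, Finsupp.support_filter]; simp

lemma lm_mem_LHm (hgr : GradedOrder X) {f : MonoidAlgebra K (FreeMonoid X)} (hf : f ≠ 0) :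
    lm f ∈ (LHm f).coeff.support := by
  rw [LHm_eq_Hc, mem_support_Hc]
  exact ⟨lm_mem hf, length_lm hgr hf⟩

lemma LHm_ne_zero (hgr : GradedOrder X) {f : MonoidAlgebra K (FreeMonoid X)} (hf : f ≠ 0) :
    LHm f ≠ 0 := by
  intro h
  have := lm_mem_LHm hgr hf
  rw [h] at this; simp at this

lemma lm_LHm (hgr : GradedOrder X) {f : MonoidAlgebra K (FreeMonoid X)} (hf : f ≠ 0) :
    lm (LHm f) = lm f := by
  refine le_antisymm (le_lm ?_) (le_lm (lm_mem_LHm hgr hf))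
  have := lm_mem (LHm_ne_zero hgr hf)
  rw [LHm_eq_Hc, mem_support_Hc] at this
  exact this.1

def IsHomogW (n : ℕ) (h : MonoidAlgebra K (FreeMonoid X)) : Prop :=
  ∀ w ∈ h.coeff.support, w.length = n

lemma Hc_isHomog (n : ℕ) (f : MonoidAlgebra K (FreeMonoid X)) : IsHomogW n (Hc n f) :=
  fun _ hw => (mem_support_Hc.mp hw).2

lemma LHm_isHomog (f : MonoidAlgebra K (FreeMonoid X)) : IsHomogW (dW f) (LHm f) :=
  Hc_isHomog _ _

lemma Hc_eq_self {n : ℕ} {h : MonoidAlgebra K (FreeMonoid X)} (hh : IsHomogW n h) :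
    Hc n h = h := by
  rw [Hc, (Finsupp.filter_eq_self_iff _ _).mpr fun w hw => hh w (Finsupp.mem_support_iff.mpr hw)]

lemma Hc_eq_zero {n : ℕ} {f : MonoidAlgebra K (FreeMonoid X)}
    (h : ∀ w ∈ f.coeff.support, w.length ≠ n) : Hc n f = 0 :=
  MonoidAlgebra.ofCoeff_eq_zero.mpr <| (Finsupp.filter_eq_zero_iff _ _).mpr fun w hw => by
    by_contra hz
    exact h w (Finsupp.mem_support_iff.mpr hz) hw

lemma Hc_add (n : ℕ) (f g : MonoidAlgebra K (FreeMonoid X)) :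
    Hc n (f + g) = Hc n f + Hc n g := by
  rw [Hc, Hc, Hc, MonoidAlgebra.coeff_add, Finsupp.filter_add, MonoidAlgebra.ofCoeff_add]

lemma Hc_neg (n : ℕ) (f : MonoidAlgebra K (FreeMonoid X)) : Hc n (-f) = -Hc n f :=
  by rw [Hc, Hc, MonoidAlgebra.coeff_neg, Finsupp.filter_neg, MonoidAlgebra.ofCoeff_neg]

lemma dW_neg (f : MonoidAlgebra K (FreeMonoid X)) : dW (-f) = dW f := by
  rw [dW, dW, MonoidAlgebra.coeff_neg, Finsupp.support_neg]

lemma LHm_neg (f : MonoidAlgebra K (FreeMonoid X)) : LHm (-f) = -LHm f := by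
  rw [LHm_eq_Hc, LHm_eq_Hc, dW_neg, Hc_neg]

lemma top_decomp {x y : MonoidAlgebra K (FreeMonoid X)} {N : ℕ} (hx : x ≠ 0)
    (hhom : IsHomogW N x) (hy : ∀ w ∈ y.coeff.support, w.length < N) :
    x + y ≠ 0 ∧ dW (x + y) = N ∧ LHm (x + y) = x := by
  obtain ⟨w, hw⟩ := Finsupp.support_nonempty_iff.mpr (mt MonoidAlgebra.coeff_eq_zero.mp hx)
  have hyw : y.coeff w = 0 := by
    by_contra h
    exact absurd (hhom w hw ▸ hy w (Finsupp.mem_support_iff.mpr h)) (lt_irrefl _)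
  have happ : (x + y).coeff w ≠ 0 := by
    rw [MonoidAlgebra.coeff_add, Finsupp.add_apply, hyw, add_zero]
    exact Finsupp.mem_support_iff.mp hw
  have hmem : w ∈ (x + y).coeff.support := Finsupp.mem_support_iff.mpr happ
  have hne : x + y ≠ 0 := by rintro h; rw [h] at hmem; simp at hmem
  have hdle : dW (x + y) ≤ N := by
    refine Finset.sup_le fun v hv => ?_
    rcases Finset.mem_union.mp (Finsupp.support_add hv) with h | h
    · exact (hhom v h).le
    · exact (hy v h).le
  have hdW : dW (x + y) = N := le_antisymm hdle ((hhom w hw) ▸ Finset.le_sup hmem)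
  refine ⟨hne, hdW, ?_⟩
  rw [LHm_eq_Hc, hdW, Hc_add, Hc_eq_self hhom, Hc_eq_zero fun w hw => (hy w hw).ne, add_zero]

lemma tail_support {f : MonoidAlgebra K (FreeMonoid X)} {w : FreeMonoid X}
    (hw : w ∈ (f - LHm f).coeff.support) : w.length < dW f := by
  have heq : f - LHm f = MonoidAlgebra.ofCoeff (Finsupp.filter (fun w => ¬ w.length = dW f) f.coeff) := by
    have h := Finsupp.filter_pos_add_filter_neg f.coeff (fun w => w.length = dW f)
    rw [LHm_eq_Hc, Hc]
    apply MonoidAlgebra.coeff_injective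
    rw [MonoidAlgebra.coeff_sub, MonoidAlgebra.coeff_ofCoeff, MonoidAlgebra.coeff_ofCoeff]
    exact (eq_sub_of_add_eq' h).symm
  rw [heq, MonoidAlgebra.coeff_ofCoeff, Finsupp.support_filter, Finset.mem_filter] at hw
  exact lt_of_le_of_ne (length_le_dW hw.1) hw.2


lemma single_mul_LHm (hgr : GradedOrder X) {u : FreeMonoid X} {c : K}
    {f : MonoidAlgebra K (FreeMonoid X)} (hc : c ≠ 0) (hf : f ≠ 0) :
    MonoidAlgebra.single u c * f ≠ 0 ∧
      LHm (MonoidAlgebra.single u c * f) = MonoidAlgebra.single u c * LHm f := by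
  set a : MonoidAlgebra K (FreeMonoid X) := MonoidAlgebra.single u c with ha
  have hx : a * LHm f ≠ 0 := by
    have happ : (a * LHm f).coeff (u * lm (LHm f)) = c * (LHm f).coeff (lm (LHm f)) :=
      MonoidAlgebra.coeff_single_mul_eq_mul_coeff _ fun b _ => mul_right_inj u
    intro h0
    rw [h0] at happ
    exact (mul_ne_zero hc
      (Finsupp.mem_support_iff.mp (lm_mem (LHm_ne_zero hgr hf)))) happ.symm
  have hhom : IsHomogW (u.length + dW f) (a * LHm f) := by
    intro w hw
    obtain ⟨p, hp, b, hb, rfl⟩ := Finset.mem_mul.mp (MonoidAlgebra.support_coeff_mul_subset _ _ hw)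
    have hp' : p = u := Finset.mem_singleton.mp (Finsupp.support_single_subset hp)
    subst hp'
    rw [FreeMonoid.length_mul, LHm_isHomog f b hb]
  have hy : ∀ w ∈ (a * (f - LHm f)).coeff.support, w.length < u.length + dW f := by
    intro w hw
    obtain ⟨p, hp, b, hb, rfl⟩ := Finset.mem_mul.mp (MonoidAlgebra.support_coeff_mul_subset _ _ hw)
    have hp' : p = u := Finset.mem_singleton.mp (Finsupp.support_single_subset hp)
    subst hp'
    rw [FreeMonoid.length_mul]
    exact Nat.add_lt_add_left (tail_support hb) _
  obtain ⟨hne, -, hLH⟩ := top_decomp hx hhom hy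
  have hsum : a * LHm f + a * (f - LHm f) = a * f := by
    rw [← mul_add]; congr 1; abel
  rw [hsum] at hne hLH
  exact ⟨hne, hLH⟩

lemma mul_single_LHm (hgr : GradedOrder X) {u : FreeMonoid X} {c : K}
    {f : MonoidAlgebra K (FreeMonoid X)} (hc : c ≠ 0) (hf : f ≠ 0) :
    f * MonoidAlgebra.single u c ≠ 0 ∧
      LHm (f * MonoidAlgebra.single u c) = LHm f * MonoidAlgebra.single u c := by
  set a : MonoidAlgebra K (FreeMonoid X) := MonoidAlgebra.single u c with ha
  have hx : LHm f * a ≠ 0 := by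
    have happ : (LHm f * a).coeff (lm (LHm f) * u) = (LHm f).coeff (lm (LHm f)) * c :=
      MonoidAlgebra.coeff_mul_single_eq_coeff_mul _ fun b _ => mul_left_inj u
    intro h0
    rw [h0] at happ
    exact (mul_ne_zero
      (Finsupp.mem_support_iff.mp (lm_mem (LHm_ne_zero hgr hf))) hc) happ.symm
  have hhom : IsHomogW (dW f + u.length) (LHm f * a) := by
    intro w hw
    obtain ⟨b, hb, p, hp, rfl⟩ := Finset.mem_mul.mp (MonoidAlgebra.support_coeff_mul_subset _ _ hw)
    have hp' : p = u := Finset.mem_singleton.mp (Finsupp.support_single_subset hp)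
    subst hp'
    rw [FreeMonoid.length_mul, LHm_isHomog f b hb]
  have hy : ∀ w ∈ ((f - LHm f) * a).coeff.support, w.length < dW f + u.length := by
    intro w hw
    obtain ⟨b, hb, p, hp, rfl⟩ := Finset.mem_mul.mp (MonoidAlgebra.support_coeff_mul_subset _ _ hw)
    have hp' : p = u := Finset.mem_singleton.mp (Finsupp.support_single_subset hp)
    subst hp'
    rw [FreeMonoid.length_mul]
    exact Nat.add_lt_add_right (tail_support hb) _
  obtain ⟨hne, -, hLH⟩ := top_decomp hx hhom hy
  have hsum : LHm f * a + (f - LHm f) * a = f * a := by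
    rw [← add_mul]; congr 1; abel
  rw [hsum] at hne hLH
  exact ⟨hne, hLH⟩

lemma LM_congr {a b : MonoidAlgebra K (FreeMonoid X)} (h : lm a = lm b) :
    (fun f => MonoidAlgebra.single (lm f) (1 : K)) a
      = (fun f => MonoidAlgebra.single (lm f) (1 : K)) b := by
  simp only
  rw [h]

lemma closure_mul_stable (hgr : GradedOrder X)
    (I : TwoSidedIdeal (MonoidAlgebra K (FreeMonoid X))) :
    ∀ x ∈ AddSubgroup.closure (LHset (I : Set (MonoidAlgebra K (FreeMonoid X)))),
      ∀ r : MonoidAlgebra K (FreeMonoid X),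
        r * x ∈ AddSubgroup.closure (LHset (I : Set (MonoidAlgebra K (FreeMonoid X)))) ∧
        x * r ∈ AddSubgroup.closure (LHset (I : Set (MonoidAlgebra K (FreeMonoid X)))) := by
  intro x hx
  induction hx using AddSubgroup.closure_induction with
  | mem h hh =>
    obtain ⟨f, ⟨hfI, hf0⟩, rfl⟩ := hh
    have hf0 : f ≠ 0 := hf0
    intro r
    induction r using MonoidAlgebra.induction with
    | zero => simp [AddSubgroup.zero_mem]
    | single_add u c r hu hc ih =>
      constructor
      · rw [add_mul]
        refine AddSubgroup.add_mem _ ?_ ih.1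
        rw [(single_mul_LHm hgr hc hf0).2.symm]
        refine AddSubgroup.subset_closure ?_
        exact ⟨_, ⟨I.mul_mem_left _ _ hfI, (single_mul_LHm hgr hc hf0).1⟩, rfl⟩
      · rw [mul_add]
        refine AddSubgroup.add_mem _ ?_ ih.2
        rw [(mul_single_LHm hgr hc hf0).2.symm]
        refine AddSubgroup.subset_closure ?_
        exact ⟨_, ⟨I.mul_mem_right _ _ hfI, (mul_single_LHm hgr hc hf0).1⟩, rfl⟩
  | zero => intro r; simp [AddSubgroup.zero_mem]
  | add x y hx hy ihx ihy =>
    intro r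
    exact ⟨by rw [mul_add]; exact AddSubgroup.add_mem _ (ihx r).1 (ihy r).1,
      by rw [add_mul]; exact AddSubgroup.add_mem _ (ihx r).2 (ihy r).2⟩
  | neg x hx ihx =>
    intro r
    exact ⟨by rw [mul_neg]; exact AddSubgroup.neg_mem _ (ihx r).1,
      by rw [neg_mul]; exact AddSubgroup.neg_mem _ (ihx r).2⟩

lemma mem_closure_of_mem_span (hgr : GradedOrder X)
    (I : TwoSidedIdeal (MonoidAlgebra K (FreeMonoid X)))
    {x : MonoidAlgebra K (FreeMonoid X)}
    (hx : x ∈ TwoSidedIdeal.span (LHset (I : Set (MonoidAlgebra K (FreeMonoid X))))) :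
    x ∈ AddSubgroup.closure (LHset (I : Set (MonoidAlgebra K (FreeMonoid X)))) := by
  set S := LHset (I : Set (MonoidAlgebra K (FreeMonoid X)))
  let T : TwoSidedIdeal (MonoidAlgebra K (FreeMonoid X)) :=
    TwoSidedIdeal.mk' (AddSubgroup.closure S : Set (MonoidAlgebra K (FreeMonoid X)))
      (AddSubgroup.zero_mem _)
      (fun h1 h2 => AddSubgroup.add_mem _ h1 h2)
      (fun h1 => AddSubgroup.neg_mem _ h1)
      (fun {r y} hy => (closure_mul_stable hgr I y hy r).1)
      (fun {y r} hy => (closure_mul_stable hgr I y hy r).2)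
  have hST : S ⊆ (T : Set (MonoidAlgebra K (FreeMonoid X))) := by
    intro y hy
    rw [SetLike.mem_coe, TwoSidedIdeal.mem_mk']
    exact AddSubgroup.subset_closure hy
  have := TwoSidedIdeal.mem_span_iff.mp hx T hST
  rwa [TwoSidedIdeal.mem_mk'] at this

lemma comp_rep (hgr : GradedOrder X)
    (I : TwoSidedIdeal (MonoidAlgebra K (FreeMonoid X))) :
    ∀ x ∈ AddSubgroup.closure (LHset (I : Set (MonoidAlgebra K (FreeMonoid X)))),
      ∀ n : ℕ, Hc n x = 0 ∨ ∃ f, f ∈ I ∧ f ≠ 0 ∧ Hc n x = LHm f := by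
  intro x hx
  induction hx using AddSubgroup.closure_induction with
  | mem h hh =>
    obtain ⟨f, ⟨hfI, hf0⟩, rfl⟩ := hh
    have hf0 : f ≠ 0 := hf0
    intro n
    by_cases hn : n = dW f
    · subst hn
      exact Or.inr ⟨f, hfI, hf0, Hc_eq_self (LHm_isHomog f)⟩
    · exact Or.inl (Hc_eq_zero fun w hw => fun h => hn ((LHm_isHomog f w hw) ▸ h.symm))
  | zero => intro n; left; rw [Hc, MonoidAlgebra.coeff_zero, Finsupp.filter_zero, MonoidAlgebra.ofCoeff_zero]
  | add x y hx hy ihx ihy =>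
    intro n
    rw [Hc_add]
    rcases ihx n with h1 | ⟨f1, hf1I, hf10, he1⟩
    · rcases ihy n with h2 | ⟨f2, hf2I, hf20, he2⟩
      · left; rw [h1, h2, add_zero]
      · right; exact ⟨f2, hf2I, hf20, by rw [h1, zero_add, he2]⟩
    · rcases ihy n with h2 | ⟨f2, hf2I, hf20, he2⟩
      · right; exact ⟨f1, hf1I, hf10, by rw [h2, add_zero, he1]⟩
      · by_cases hz : Hc n x + Hc n y = 0
        · left; exact hz
        · right
          have hdim : ∀ (f : MonoidAlgebra K (FreeMonoid X)) (hf : f ≠ 0)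
              (g : MonoidAlgebra K (FreeMonoid X)), Hc n g = LHm f → Hc n g ≠ 0 → dW f = n := by
            intro f hf g hg hg0
            obtain ⟨w, hw⟩ := Finsupp.support_nonempty_iff.mpr (mt MonoidAlgebra.coeff_eq_zero.mp (hg ▸ hg0 : LHm f ≠ 0))
            have h1 := LHm_isHomog f w hw
            have h2 := Hc_isHomog n g w (by rw [hg]; exact hw)
            rw [← h1, h2]
          have hx0 : Hc n x ≠ 0 := by rw [he1]; exact LHm_ne_zero hgr hf10
          have hy0 : Hc n y ≠ 0 := by rw [he2]; exact LHm_ne_zero hgr hf20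
          have hd1 : dW f1 = n := hdim f1 hf10 x he1 hx0
          have hd2 : dW f2 = n := hdim f2 hf20 y he2 hy0
          have hhom : IsHomogW n (LHm f1 + LHm f2) := by
            intro w hw
            rcases Finset.mem_union.mp (Finsupp.support_add hw) with h | h
            · rw [LHm_isHomog f1 w h, hd1]
            · rw [LHm_isHomog f2 w h, hd2]
          have hyy : ∀ w ∈ ((f1 - LHm f1) + (f2 - LHm f2)).coeff.support, w.length < n := by
            intro w hw
            rcases Finset.mem_union.mp (Finsupp.support_add hw) with h | h
            · exact hd1 ▸ tail_support h
            · exact hd2 ▸ tail_support h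
          have hxne : LHm f1 + LHm f2 ≠ 0 := by rw [← he1, ← he2]; exact hz
          obtain ⟨hne, -, hLH⟩ := top_decomp hxne hhom hyy
          have hsum : (LHm f1 + LHm f2) + ((f1 - LHm f1) + (f2 - LHm f2)) = f1 + f2 := by abel
          rw [hsum] at hne hLH
          exact ⟨f1 + f2, I.add_mem hf1I hf2I, hne, by rw [hLH, he1, he2]⟩
  | neg x hx ihx =>
    intro n
    rw [Hc_neg]
    rcases ihx n with h | ⟨f, hfI, hf0, he⟩
    · left; rw [h, neg_zero]
    · right
      refine ⟨-f, I.neg_mem hfI, neg_ne_zero.mpr hf0, ?_⟩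
      rw [LHm_neg, he]

lemma LMset_span_LHset (hgr : GradedOrder X)
    (I : TwoSidedIdeal (MonoidAlgebra K (FreeMonoid X))) :
    LMset ((TwoSidedIdeal.span (LHset (I : Set (MonoidAlgebra K (FreeMonoid X)))) :
        TwoSidedIdeal (MonoidAlgebra K (FreeMonoid X))) : Set _) =
      LMset (I : Set (MonoidAlgebra K (FreeMonoid X))) := by
  ext z
  constructor
  · rintro ⟨F, ⟨hFspan, hF0⟩, rfl⟩
    have hF0 : F ≠ 0 := hF0
    have hFcl := mem_closure_of_mem_span hgr I (by exact hFspan)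
    rcases comp_rep hgr I F hFcl (dW F) with h | ⟨f, hfI, hf0, he⟩
    · exact absurd h (LHm_ne_zero hgr hF0)
    · have : lm F = lm f := by
        rw [← lm_LHm hgr hF0, ← lm_LHm hgr hf0, LHm_eq_Hc F, he]
      exact ⟨f, ⟨hfI, hf0⟩, LM_congr this.symm⟩
  · rintro ⟨f, ⟨hfI, hf0⟩, rfl⟩
    have hf0 : f ≠ 0 := hf0
    refine ⟨LHm f, ⟨?_, LHm_ne_zero hgr hf0⟩, LM_congr (lm_LHm hgr hf0)⟩
    exact TwoSidedIdeal.subset_span ⟨f, ⟨hfI, hf0⟩, rfl⟩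

lemma LMset_LHset (hgr : GradedOrder X) (G : Set (MonoidAlgebra K (FreeMonoid X))) :
    LMset (LHset G) = LMset G := by
  ext z
  constructor
  · rintro ⟨h, ⟨⟨g, ⟨hgG, hg0⟩, rfl⟩, -⟩, rfl⟩
    have hg0 : g ≠ 0 := hg0
    exact ⟨g, ⟨hgG, hg0⟩, LM_congr (lm_LHm hgr hg0).symm⟩
  · rintro ⟨g, ⟨hgG, hg0⟩, rfl⟩
    have hg0 : g ≠ 0 := hg0
    exact ⟨LHm g, ⟨⟨g, ⟨hgG, hg0⟩, rfl⟩, LHm_ne_zero hgr hg0⟩,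
      LM_congr (lm_LHm hgr hg0)⟩

/-- `𝒢 ⊆ I` is a Gröbner basis of `I` iff `LH(𝒢)` is a Gröbner basis of
the graded ideal `⟨LH(I)⟩`. -/
theorem stmt16 (hgr : GradedOrder X) (hmo : MonomialOrder' X)
    (hwf : WellFoundedLT (FreeMonoid X))
    (I : TwoSidedIdeal (MonoidAlgebra K (FreeMonoid X)))
    (G : Set (MonoidAlgebra K (FreeMonoid X))) (hGI : G ⊆ (I : Set _)) :
    TwoSidedIdeal.span (LMset (I : Set (MonoidAlgebra K (FreeMonoid X)))) =
        TwoSidedIdeal.span (LMset G) ↔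
      TwoSidedIdeal.span (LMset
          ((TwoSidedIdeal.span (LHset (I : Set (MonoidAlgebra K (FreeMonoid X)))) :
            TwoSidedIdeal (MonoidAlgebra K (FreeMonoid X))) : Set _)) =
        TwoSidedIdeal.span (LMset (LHset G)) := by
  rw [LMset_span_LHset hgr I, LMset_LHset hgr G]
end
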